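/- Let T be the 4×4 antisymmetric complex matrix with entries τ_ij (τ_ij = −τ_ji, τ_ii = 0), and set R = τ_12 τ_34 + τ_13 τ_42 + τ_14 τ_23. Then det(1 + T T̄) = (1 − Σ_{i<j} |τ_ij|² + |R|²)², where T̄ is the entrywise complex conjugate of T. -/

import Mathlib

namespace SpinNetworks

noncomputable section

open Matrix BigOperators

set_option maxHeartbeats 1000000

lemma det_four (a b c d e f g h i j k l m n o p : ℂ) :
    (!![a,b,c,d; e,f,g,h; i,j,k,l; m,n,o,p]).det =
      a*f*k*p - a*f*l*o - a*g*j*p + a*g*l*n + a*h*j*o - a*h*k*n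
      - b*e*k*p + b*e*l*o + b*g*i*p - b*g*l*m - b*h*i*o + b*h*k*m
      + c*e*j*p - c*e*l*n - c*f*i*p + c*f*l*m + c*h*i*n - c*h*j*m
      - d*e*j*o + d*e*k*n + d*f*i*o - d*f*k*m - d*g*i*n + d*g*j*m := by
  simp [Matrix.det_succ_row_zero, Fin.sum_univ_succ, Fin.succAbove]
  ring

/-- for a 4×4 antisymmetric complex matrix `T = (τ_ij)` with Pfaffian
`R = τ₁₂τ₃₄ + τ₁₃τ₄₂ + τ₁₄τ₂₃`, one has
`det(1 + T T̄) = (1 − Σ_{i<j} |τ_ij|² + |R|²)²`. -/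
theorem det_one_add_mul_conj_four (T : Matrix (Fin 4) (Fin 4) ℂ) (hT : Tᵀ = -T)
    (R : ℂ) (hR : R = T 0 1 * T 2 3 + T 0 2 * T 3 1 + T 0 3 * T 1 2) :
    (1 + T * T.map (starRingEnd ℂ)).det
      = ((1 : ℂ) - (∑ i : Fin 4, ∑ j ∈ Finset.Ioi i, (Complex.normSq (T i j) : ℂ))
          + (Complex.normSq R : ℂ)) ^ 2 := by
  have h : ∀ i j, T j i = -T i j := fun i j => by
    simpa using congrFun (congrFun hT i) j
  set s : ℂ →+* ℂ := starRingEnd ℂ with hs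
  set a := T 0 1 with ha
  set b := T 0 2 with hb
  set c := T 0 3 with hc
  set d := T 1 2 with hd
  set e := T 1 3 with he
  set f := T 2 3 with hf
  have e0 : T 0 0 = 0 := by linear_combination (h 0 0) / 2
  have e1 : T 1 1 = 0 := by linear_combination (h 1 1) / 2
  have e2 : T 2 2 = 0 := by linear_combination (h 2 2) / 2
  have e3 : T 3 3 = 0 := by linear_combination (h 3 3) / 2
  have h10 : T 1 0 = -a := h 0 1
  have h20 : T 2 0 = -b := h 0 2
  have h30 : T 3 0 = -c := h 0 3
  have h21 : T 2 1 = -d := h 1 2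
  have h31 : T 3 1 = -e := h 1 3
  have h32 : T 3 2 = -f := h 2 3
  have hM : (1 + T * T.map s) =
      !![1 - a*s a - b*s b - c*s c, -(b*s d) - c*s e, a*s d - c*s f, a*s e + b*s f;
         -(d*s b) - e*s c, 1 - a*s a - d*s d - e*s e, -(a*s b) - e*s f, -(a*s c) + d*s f;
         d*s a - f*s c, -(b*s a) - f*s e, 1 - b*s b - d*s d - f*s f, -(b*s c) - d*s e;
         e*s a + f*s b, -(c*s a) + f*s d, -(c*s b) - e*s d, 1 - c*s c - e*s e - f*s f] := by
    ext i j
    fin_cases i <;> fin_cases j <;>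
      simp [Matrix.mul_apply, Matrix.one_apply, Matrix.map_apply, Fin.sum_univ_four,
        ← ha, ← hb, ← hc, ← hd, ← he, ← hf, e0, e1, e2, e3, h10, h20, h30, h21, h31, h32, map_neg] <;> ring
  have i0 : Finset.Ioi (0 : Fin 4) = {1,2,3} := by decide
  have i1 : Finset.Ioi (1 : Fin 4) = {2,3} := by decide
  have i2 : Finset.Ioi (2 : Fin 4) = {3} := by decide
  have i3 : Finset.Ioi (3 : Fin 4) = ∅ := by decide
  rw [hM, det_four]
  rw [Fin.sum_univ_four, i0, i1, i2, i3, Finset.sum_insert (by decide),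
    Finset.sum_insert (by decide), Finset.sum_singleton, Finset.sum_insert (by decide),
    Finset.sum_singleton, Finset.sum_singleton, Finset.sum_empty]
  simp only [← Complex.mul_conj, hR, h31, map_add, _root_.map_mul, map_neg, ← hs]
  ring

end
end SpinNetworks
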